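/- arXiv:2309.03091 — 3 statements merged into one kernel-verified Lean document; each statement's English description precedes it below -/
import Mathlib

section
/- Let A_Γ be an Artin group, χ : A_Γ → ℝ a group homomorphism, and let Liv₀ be the full labelled subgraph of Γ induced by the vertices v with χ(v) ≠ 0. Then the assignment v ↦ v for χ(v) ≠ 0 and v ↦ 1 for χ(v) = 0 extends to a group homomorphism ρ : A_Γ → A_{Liv₀}, the assignment v ↦ v on vertices of Liv₀ extends to a group homomorphism ι : A_{Liv₀} → A_Γ, and ρ ∘ ι is the identity of A_{Liv₀} (so ι splits and A_Γ is a semidirect product of ker ρ by A_{Liv₀}). -/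
def altWord {V : Type*} (u v : V) : ℕ → FreeGroup V
  | 0 => 1
  | m + 1 => FreeGroup.of u * altWord v u m

structure LabeledGraph (V : Type*) where
  Adj : V → V → Prop
  symm : ∀ {u v}, Adj u v → Adj v u
  loopless : ∀ v, ¬ Adj v v
  label : V → V → ℕ
  label_symm : ∀ u v, label u v = label v u
  two_le_label : ∀ {u v}, Adj u v → 2 ≤ label u v

def artinRels {V : Type*} (Γ : LabeledGraph V) : Set (FreeGroup V) :=
  {r | ∃ u v : V, Γ.Adj u v ∧
    r = altWord u v (Γ.label u v) * (altWord v u (Γ.label u v))⁻¹}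

abbrev ArtinGroup {V : Type*} (Γ : LabeledGraph V) : Type _ :=
  PresentedGroup (artinRels Γ)

def LabeledGraph.induced {V : Type*} (Γ : LabeledGraph V) (S : Set V) :
    LabeledGraph S where
  Adj u v := Γ.Adj u.1 v.1
  symm h := Γ.symm h
  loopless v := Γ.loopless v.1
  label u v := Γ.label u.1 v.1
  label_symm u v := Γ.label_symm u.1 v.1
  two_le_label h := Γ.two_le_label h

def altG {G : Type*} [Group G] (a b : G) : ℕ → G
  | 0 => 1
  | m + 1 => a * altG b a m

lemma map_altWord {V G : Type*} [Group G] (φ : FreeGroup V →* G) (u v : V) (m : ℕ) :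
    φ (altWord u v m) = altG (φ (FreeGroup.of u)) (φ (FreeGroup.of v)) m := by
  induction m generalizing u v with
  | zero => simp [altWord, altG]
  | succ n ih => simp [altWord, altG, ih]

lemma map_altG {G H : Type*} [Group G] [Group H] (φ : G →* H) (a b : G) (m : ℕ) :
    φ (altG a b m) = altG (φ a) (φ b) m := by
  induction m generalizing a b with
  | zero => simp [altG]
  | succ n ih => simp [altG, ih]

lemma altG_even {G : Type*} [Group G] (a b : G) (k : ℕ) :
    altG a b (2 * k) = (a * b) ^ k := by
  induction k generalizing a b with
  | zero => simp [altG]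
  | succ n ih =>
      have : 2 * (n + 1) = (2 * n) + 1 + 1 := by ring
      rw [this]
      show a * (b * altG a b (2 * n)) = _
      rw [ih, pow_succ', mul_assoc]

lemma altG_odd {G : Type*} [Group G] (a b : G) (k : ℕ) :
    altG a b (2 * k + 1) = a * (b * a) ^ k := by
  show a * altG b a (2 * k) = _
  rw [altG_even]

/-- In the Artin group, the braid relation holds on generators. -/
lemma artin_rel {W : Type*} (Δ : LabeledGraph W) {u v : W} (h : Δ.Adj u v) :
    altG (PresentedGroup.of u : ArtinGroup Δ) (PresentedGroup.of v) (Δ.label u v)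
      = altG (PresentedGroup.of v) (PresentedGroup.of u) (Δ.label u v) := by
  have hr : altWord u v (Δ.label u v) * (altWord v u (Δ.label u v))⁻¹ ∈ artinRels Δ :=
    ⟨u, v, h, rfl⟩
  have h1 : (PresentedGroup.mk (artinRels Δ))
      (altWord u v (Δ.label u v) * (altWord v u (Δ.label u v))⁻¹) = 1 :=
    (QuotientGroup.eq_one_iff _).mpr (Subgroup.subset_normalClosure hr)
  rw [map_mul, map_inv, mul_inv_eq_one] at h1
  rw [map_altWord, map_altWord] at h1
  exact h1

lemma altG_one_right {G : Type*} [Group G] (m : ℕ) :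
    altG (1 : G) 1 m = 1 := by
  induction m with
  | zero => rfl
  | succ n ih => show (1 : G) * altG 1 1 n = 1; rw [ih, one_mul]

/-- for a character `χ : A_Γ → ℝ` and the living subgraph `Liv₀`
induced by the vertices `v` with `χ(v) ≠ 0`, the assignment `v ↦ v` (for living
`v`) and `v ↦ 1` (for dead `v`) extends to a homomorphism `ρ : A_Γ → A_{Liv₀}`,
the assignment `v ↦ v` extends to a homomorphism `ι : A_{Liv₀} → A_Γ`, and
`ρ ∘ ι = id`. -/
theorem statement5 {V : Type*} (Γ : LabeledGraph V)
    (χ : ArtinGroup Γ →* Multiplicative ℝ) :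
    ∃ (ρ : ArtinGroup Γ →*
        ArtinGroup (Γ.induced {v : V | χ (PresentedGroup.of v) ≠ 1}))
      (ι : ArtinGroup (Γ.induced {v : V | χ (PresentedGroup.of v) ≠ 1}) →*
        ArtinGroup Γ),
      (∀ (v : V) (h : χ (PresentedGroup.of v) ≠ 1),
        ρ (PresentedGroup.of v) = PresentedGroup.of ⟨v, h⟩) ∧
      (∀ v : V, χ (PresentedGroup.of v) = 1 → ρ (PresentedGroup.of v) = 1) ∧
      (∀ w : {v : V | χ (PresentedGroup.of v) ≠ 1},
        ι (PresentedGroup.of w) = PresentedGroup.of w.1) ∧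
      ρ.comp ι = MonoidHom.id _ := by
  classical
  set S : Set V := {v : V | χ (PresentedGroup.of v) ≠ 1} with hS
  -- key: an odd-labelled edge forces equal character values
  have hodd : ∀ {u v : V}, Γ.Adj u v → Odd (Γ.label u v) →
      χ (PresentedGroup.of u) = χ (PresentedGroup.of v) := by
    intro u v hadj ⟨k, hk⟩
    have h1 := congrArg χ (artin_rel Γ hadj)
    rw [map_altG, map_altG, hk] at h1
    set x := χ (PresentedGroup.of u)
    set y := χ (PresentedGroup.of v)
    rw [show 2 * k + 1 = 2 * k + 1 from rfl, altG_odd, altG_odd] at h1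
    have h2 := congrArg Multiplicative.toAdd h1
    simp only [toAdd_mul, toAdd_pow, smul_eq_mul] at h2
    simp only [nsmul_eq_mul] at h2
    have : x.toAdd = y.toAdd := by linarith
    exact Multiplicative.toAdd.injective this
  -- the retraction data
  set g : V → ArtinGroup (Γ.induced S) := fun v =>
    if h : χ (PresentedGroup.of v) ≠ 1 then PresentedGroup.of (⟨v, h⟩ : S) else 1 with hg
  have hrels : ∀ r ∈ artinRels Γ, FreeGroup.lift g r = 1 := by
    rintro r ⟨u, v, hadj, rfl⟩
    rw [map_mul, map_inv, mul_inv_eq_one, map_altWord, map_altWord,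
      FreeGroup.lift_apply_of, FreeGroup.lift_apply_of]
    by_cases hu : χ (PresentedGroup.of u) ≠ 1 <;>
      by_cases hv : χ (PresentedGroup.of v) ≠ 1
    · simp only [hg, dif_pos hu, dif_pos hv]
      have := artin_rel (Γ.induced S) (u := ⟨u, hu⟩) (v := ⟨v, hv⟩) hadj
      exact this
    · -- v dead: label must be even
      rcases Nat.even_or_odd (Γ.label u v) with ⟨k, hk⟩ | ho
      · rw [hg]; simp only [dif_pos hu, dif_neg hv]
        rw [show Γ.label u v = 2 * k by omega, altG_even, altG_even, mul_one, one_mul]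
      · exact absurd ((hodd hadj ho).trans (not_ne_iff.mp hv)) hu
    · rcases Nat.even_or_odd (Γ.label u v) with ⟨k, hk⟩ | ho
      · rw [hg]; simp only [dif_neg hu, dif_pos hv]
        rw [show Γ.label u v = 2 * k by omega, altG_even, altG_even, mul_one, one_mul]
      · exact absurd ((hodd hadj ho).symm.trans (not_ne_iff.mp hu)) hv
    · rw [hg]; simp only [dif_neg hu, dif_neg hv]
  have hrels' : ∀ r ∈ artinRels (Γ.induced S),
      FreeGroup.lift (fun w : S => (PresentedGroup.of w.1 : ArtinGroup Γ)) r = 1 := by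
    rintro r ⟨u, v, hadj, rfl⟩
    rw [map_mul, map_inv, mul_inv_eq_one, map_altWord, map_altWord,
      FreeGroup.lift_apply_of, FreeGroup.lift_apply_of]
    exact artin_rel Γ (u := u.1) (v := v.1) hadj
  refine ⟨PresentedGroup.toGroup hrels, PresentedGroup.toGroup hrels', ?_, ?_, ?_, ?_⟩
  · intro v h
    rw [PresentedGroup.toGroup.of]; exact dif_pos h
  · intro v h
    rw [PresentedGroup.toGroup.of]; exact dif_neg (not_ne_iff.mpr h)
  · intro w
    rw [PresentedGroup.toGroup.of]
  · apply PresentedGroup.ext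
    intro w
    simp only [MonoidHom.comp_apply, MonoidHom.id_apply]
    rw [PresentedGroup.toGroup.of, PresentedGroup.toGroup.of]
    exact dif_pos w.2
end

section
/- Let F be a field and let R = F[t, t⁻¹] be the ring of Laurent polynomials over F. The kernel of the R-linear map R² → R given by (x, y) ↦ (1 − t)·x + (1 − t⁻¹)·y equals the cyclic submodule generated by (1, t), i.e. { (x, t·x) ∣ x ∈ R }; in particular it is a free R-module of rank 1 and hence an infinite-dimensional F-vector space. -/
open LaurentPolynomial

private lemma hT_aux (F : Type*) [Field F] :
    (T (-1) : LaurentPolynomial F) * T 1 = 1 := by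
  rw [← T_add]; norm_num

private lemma T_one_ne_one (F : Type*) [Field F] : (T 1 : LaurentPolynomial F) ≠ 1 := by
  rw [LaurentPolynomial.T, AddMonoidAlgebra.one_def]
  intro h
  rcases AddMonoidAlgebra.single_inj.mp h with ⟨h1, -⟩ | ⟨h1, -⟩
  · exact one_ne_zero h1
  · exact one_ne_zero h1

private lemma key (F : Type*) [Field F] (x y : LaurentPolynomial F) :
    (1 - T 1) * x + (1 - T (-1)) * y = 0 ↔ y = T 1 * x := by
  have hT := hT_aux F
  constructor
  · intro h
    have h2 : ((1 : LaurentPolynomial F) - T 1) * (x - T (-1) * y) = 0 := by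
      linear_combination h + y * hT
    rcases mul_eq_zero.mp h2 with h3 | h3
    · exact absurd (by linear_combination -h3 : (T 1 : LaurentPolynomial F) = 1)
        (T_one_ne_one F)
    · linear_combination (-(T 1)) * h3 - y * hT
  · intro h
    linear_combination (1 - T (-1)) * h - x * hT

/-- over `R = F[t,t⁻¹]`, the kernel of the `R`-linear map
`R² → R`, `(x, y) ↦ (1 − t)x + (1 − t⁻¹)y` is the cyclic submodule generated by
`(1, t)`; in particular it is not a finite-dimensional `F`-vector space. -/
theorem statement16 (F : Type*) [Field F] :
    LinearMap.ker
        (LinearMap.coprod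
          (LinearMap.mulLeft (LaurentPolynomial F)
            ((1 : LaurentPolynomial F) - T 1))
          (LinearMap.mulLeft (LaurentPolynomial F)
            ((1 : LaurentPolynomial F) - T (-1)))) =
      Submodule.span (LaurentPolynomial F)
        {((1 : LaurentPolynomial F), (T 1 : LaurentPolynomial F))} ∧
    ¬ Module.Finite F
        (LinearMap.ker
          (LinearMap.coprod
            (LinearMap.mulLeft (LaurentPolynomial F)
              ((1 : LaurentPolynomial F) - T 1))
            (LinearMap.mulLeft (LaurentPolynomial F)
              ((1 : LaurentPolynomial F) - T (-1))))) := by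
  set R := LaurentPolynomial F
  set K := LinearMap.ker
        (LinearMap.coprod
          (LinearMap.mulLeft R ((1 : R) - T 1))
          (LinearMap.mulLeft R ((1 : R) - T (-1)))) with hK
  have hmem : ∀ p : R × R, p ∈ K ↔ p.2 = T 1 * p.1 := by
    rintro ⟨x, y⟩
    rw [hK, LinearMap.mem_ker, LinearMap.coprod_apply, LinearMap.mulLeft_apply,
      LinearMap.mulLeft_apply]
    exact key F x y
  constructor
  · ext ⟨x, y⟩
    rw [hmem, Submodule.mem_span_singleton]
    constructor
    · intro h
      refine ⟨x, ?_⟩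
      have h' : y = T 1 * x := h
      have : x • ((1 : R), (T 1 : R)) = (x * 1, x * T 1) := rfl
      rw [this, mul_one, h', mul_comm]
    · rintro ⟨a, ha⟩
      have h1 : a * 1 = x := congrArg Prod.fst ha
      have h2 : a * T 1 = y := congrArg Prod.snd ha
      show y = T 1 * x
      rw [← h2, ← h1]; ring
  · intro hfin
    have hg : Function.Surjective
        ((LinearMap.fst F R R).comp (K.subtype.restrictScalars F)) := by
      intro x
      exact ⟨⟨(x, T 1 * x), (hmem (x, T 1 * x)).mpr rfl⟩, rfl⟩
    have : Module.Finite F R := Module.Finite.of_surjective _ hg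
    have b : Module.Basis ℤ F R := AddMonoidAlgebra.basis ℤ F
    have : Finite ℤ := Module.Finite.finite_basis b
    exact (not_finite_iff_infinite.mpr inferInstance) this
end

section
/- Let F be a field of characteristic 2 and let R = F[t, t⁻¹] be the ring of Laurent polynomials over F. The kernel of the R-linear map R² → R given by (x, y) ↦ (t² + t + 1)(t + 1)·x + (t⁻² + t⁻¹ + 1)(t⁻¹ + 1)·y equals the cyclic submodule generated by (1, t³); in particular it is a free R-module of rank 1 and hence an infinite-dimensional F-vector space. -/
open LaurentPolynomial

private lemma laurent_two_eq_zero (F : Type*) [Field F] (hF : ringChar F = 2) :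
    (2 : LaurentPolynomial F) = 0 := by
  have hc : CharP F 2 := hF ▸ ringChar.charP F
  rw [← map_ofNat (C : F →+* LaurentPolynomial F) 2,
    show ((2 : F)) = ((2 : ℕ) : F) by norm_num, CharP.cast_eq_zero F 2, map_zero]

/-- over `R = F[t,t⁻¹]` with `F` of characteristic 2, the kernel of
the `R`-linear map `R² → R`,
`(x, y) ↦ (t² + t + 1)(t + 1)x + (t⁻² + t⁻¹ + 1)(t⁻¹ + 1)y` is the cyclic
submodule generated by `(1, t³)`; in particular it is not a finite-dimensional
`F`-vector space. -/
theorem statement17 (F : Type*) [Field F] (hF : ringChar F = 2) :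
    LinearMap.ker
        (LinearMap.coprod
          (LinearMap.mulLeft (LaurentPolynomial F)
            ((T 2 + T 1 + (1 : LaurentPolynomial F)) * (T 1 + 1)))
          (LinearMap.mulLeft (LaurentPolynomial F)
            ((T (-2) + T (-1) + (1 : LaurentPolynomial F)) * (T (-1) + 1)))) =
      Submodule.span (LaurentPolynomial F)
        {((1 : LaurentPolynomial F), (T 3 : LaurentPolynomial F))} ∧
    ¬ Module.Finite F
        (LinearMap.ker
          (LinearMap.coprod
            (LinearMap.mulLeft (LaurentPolynomial F)
              ((T 2 + T 1 + (1 : LaurentPolynomial F)) * (T 1 + 1)))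
            (LinearMap.mulLeft (LaurentPolynomial F)
              ((T (-2) + T (-1) + (1 : LaurentPolynomial F)) * (T (-1) + 1))))) := by
  set p : LaurentPolynomial F := (T 2 + T 1 + 1) * (T 1 + 1) with hp
  set q : LaurentPolynomial F := (T (-2) + T (-1) + 1) * (T (-1) + 1) with hq'
  have h2 : (2 : LaurentPolynomial F) = 0 := laurent_two_eq_zero F hF
  -- `q = T(-3) * p`
  have hq : q = T (-3) * p := by
    rw [hp, hq']
    simp only [mul_add, add_mul, mul_one, one_mul, ← T_add]
    norm_num
    ring
  -- `p ≠ 0`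
  have hp0 : p ≠ 0 := by
    have h1 : p = Polynomial.toLaurent
        ((Polynomial.X ^ 2 + Polynomial.X + 1) * (Polynomial.X + 1) : Polynomial F) := by
      simp [hp, map_mul, map_add, map_pow, Polynomial.toLaurent_X, ← T_add]
    rw [h1, Polynomial.toLaurent_ne_zero]
    intro h
    have := congrArg (Polynomial.eval 0) h
    simp at this
  have hker : LinearMap.ker
        (LinearMap.coprod
          (LinearMap.mulLeft (LaurentPolynomial F) p)
          (LinearMap.mulLeft (LaurentPolynomial F) q)) =
      Submodule.span (LaurentPolynomial F)
        {((1 : LaurentPolynomial F), (T 3 : LaurentPolynomial F))} := by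
    ext ⟨x, y⟩
    simp only [LinearMap.mem_ker, LinearMap.coprod_apply, LinearMap.mulLeft_apply,
      Submodule.mem_span_singleton, Prod.smul_mk, Prod.mk.injEq, smul_eq_mul, mul_one]
    constructor
    · intro h
      refine ⟨x, rfl, ?_⟩
      rw [hq] at h
      have hxy : x + T (-3) * y = 0 := by
        refine mul_left_cancel₀ hp0 ?_
        rw [mul_zero]
        linear_combination h
      have hx : x = T (-3) * y := by
        have h4 : (2 : LaurentPolynomial F) * (T (-3) * y) = 0 := by rw [h2, zero_mul]
        linear_combination hxy - h4
      rw [hx]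
      calc T (-3) * y * T 3 = T 3 * T (-3) * y := by ring
      _ = y := by rw [← T_add]; norm_num [T_zero]
    · rintro ⟨c, hc1, hc2⟩
      rw [← hc1, ← hc2, hq]
      have he : p * c + T (-3) * p * (c * T 3)
          = (1 + T (-3) * T 3) * (p * c) := by ring
      rw [he, ← T_add, show ((-3 : ℤ) + 3) = 0 by norm_num, T_zero,
        one_add_one_eq_two, h2, zero_mul]
  refine ⟨hker, ?_⟩
  intro hfin
  -- build an `F`-linear surjection from the kernel onto `R` (first coordinate)
  set K := LinearMap.ker
      (LinearMap.coprod
        (LinearMap.mulLeft (LaurentPolynomial F) p)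
        (LinearMap.mulLeft (LaurentPolynomial F) q)) with hK
  let f : K →ₗ[F] LaurentPolynomial F :=
    (LinearMap.fst F (LaurentPolynomial F) (LaurentPolynomial F)).comp
      (K.subtype.restrictScalars F)
  have hsurj : Function.Surjective f := by
    intro c
    have hmem : c • ((1 : LaurentPolynomial F), (T 3 : LaurentPolynomial F)) ∈ K := by
      rw [hker]
      exact Submodule.smul_mem _ c (Submodule.mem_span_singleton_self _)
    exact ⟨⟨_, hmem⟩, by simp [f]⟩
  have : Module.Finite F (LaurentPolynomial F) := Module.Finite.of_surjective f hsurj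
  have b : Module.Basis ℤ F (LaurentPolynomial F) := AddMonoidAlgebra.basis ℤ F
  have := Module.Finite.finite_basis b
  exact not_finite ℤ
end
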